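/- Under the linear herding model, suppose w̃_ℓ < 1 for all ℓ ≥ 2, so that ϕ_j > 0 for all j ≥ 0. Fix m ∈ 𝓜 and define the rescaled error β̂_{i,m} = (β_{i,m} − α_m)/ϕ_{i−1} for i ≥ 1. Then (β̂_{i,m})_{i≥1} is a martingale with respect to the filtration (𝓗_i)_{i≥1}: E[β̂_{i+1,m} | 𝓗_i] = β̂_{i,m} almost surely for every i ≥ 1. -/

import Mathlib

open MeasureTheory Filter

/-- Cumulative weight `∑_{j=1}^i w_j`. -/
noncomputable def Sw (w : ℕ → ℝ) (i : ℕ) : ℝ := ∑ j ∈ Finset.Icc 1 i, w j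

/-- Normalized weight `w̃_i = w_i / ∑_{j=1}^i w_j`. -/
noncomputable def wnorm (w : ℕ → ℝ) (i : ℕ) : ℝ := w i / Sw w i

/-- Historical collective opinion
`β_{i,m} = (∑_{j=1}^i w_j 1{R_j = m}) / (∑_{j=1}^i w_j)`. -/
noncomputable def betaH {Ω : Type*} (w : ℕ → ℝ) (R : ℕ → Ω → ℕ) (i m : ℕ) (ω : Ω) : ℝ :=
  (∑ j ∈ Finset.Icc 1 i, w j * (if R j ω = m then (1 : ℝ) else 0)) / Sw w i

/-- `𝓗_i`: the σ-algebra generated by `R_1, …, R_i` (trivial for `i = 0`). -/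
def Hsig {Ω : Type*} (R : ℕ → Ω → ℕ) (i : ℕ) : MeasurableSpace Ω :=
  ⨆ j ∈ Finset.Icc 1 i, MeasurableSpace.comap (R j) ⊤

/-- `ϕ_j = ∏_{ℓ=1}^j [1 − w̃_{ℓ+1} (1 − γ_ℓ + η_ℓ γ_ℓ)]` (with `ϕ_0 = 1`). -/
noncomputable def varphi (wt γ η : ℕ → ℝ) (j : ℕ) : ℝ :=
  ∏ ℓ ∈ Finset.Icc 1 j, (1 - wt (ℓ + 1) * (1 - γ ℓ + η ℓ * γ ℓ))

/-- Rescaled error `β̂_{i,m} = (β_{i,m} − α_m)/ϕ_{i−1}`. -/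
noncomputable def betaHat {Ω : Type*} (w γ η : ℕ → ℝ) (R : ℕ → Ω → ℕ) (α : ℕ → ℝ)
    (i m : ℕ) (ω : Ω) : ℝ :=
  (betaH w R i m ω - α m) / varphi (wnorm w) γ η (i - 1)

/-! Auxiliary lemmas -/


lemma Sw_pos {w : ℕ → ℝ} (hw : ∀ j, 0 ≤ w j) (hw1 : 0 < w 1) {i : ℕ} (hi : 1 ≤ i) :
    0 < Sw w i := by
  have h1 : (1 : ℕ) ∈ Finset.Icc 1 i := Finset.mem_Icc.2 ⟨le_rfl, hi⟩
  exact lt_of_lt_of_le hw1 (Finset.single_le_sum (fun j _ => hw j) h1)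

lemma Sw_succ (w : ℕ → ℝ) (i : ℕ) (hi : 1 ≤ i) : Sw w (i + 1) = Sw w i + w (i + 1) := by
  simpa [Sw] using Finset.sum_Icc_succ_top (by omega : 1 ≤ i + 1) w

lemma wnorm_nonneg {w : ℕ → ℝ} (hw : ∀ j, 0 ≤ w j) (hw1 : 0 < w 1) {i : ℕ} (hi : 1 ≤ i) :
    0 ≤ wnorm w (i + 1) := by
  have hS : 0 < Sw w (i + 1) := Sw_pos hw hw1 (by omega)
  exact div_nonneg (hw _) hS.le

lemma factor_pos {w γ η : ℕ → ℝ} (hw : ∀ j, 0 ≤ w j) (hw1 : 0 < w 1)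
    (hwlt : ∀ ℓ : ℕ, 2 ≤ ℓ → wnorm w ℓ < 1)
    (hγ : ∀ i, γ i ∈ Set.Icc (0 : ℝ) 1) (hη : ∀ i, η i ∈ Set.Icc (0 : ℝ) 1)
    {ℓ : ℕ} (hℓ : 1 ≤ ℓ) :
    0 < 1 - wnorm w (ℓ + 1) * (1 - γ ℓ + η ℓ * γ ℓ) := by
  have hwn : 0 ≤ wnorm w (ℓ + 1) := wnorm_nonneg hw hw1 hℓ
  have hwn1 : wnorm w (ℓ + 1) < 1 := hwlt _ (by omega)
  have hγℓ := hγ ℓ; have hηℓ := hη ℓ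
  simp only [Set.mem_Icc] at hγℓ hηℓ
  have h1 : 1 - γ ℓ + η ℓ * γ ℓ ≤ 1 := by nlinarith [hγℓ.1, hγℓ.2, hηℓ.1, hηℓ.2]
  have h0 : 0 ≤ 1 - γ ℓ + η ℓ * γ ℓ := by nlinarith [hγℓ.1, hγℓ.2, hηℓ.1, hηℓ.2]
  nlinarith

lemma varphi_pos {w γ η : ℕ → ℝ} (hw : ∀ j, 0 ≤ w j) (hw1 : 0 < w 1)
    (hwlt : ∀ ℓ : ℕ, 2 ≤ ℓ → wnorm w ℓ < 1)
    (hγ : ∀ i, γ i ∈ Set.Icc (0 : ℝ) 1) (hη : ∀ i, η i ∈ Set.Icc (0 : ℝ) 1)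
    (j : ℕ) : 0 < varphi (wnorm w) γ η j := by
  unfold varphi
  apply Finset.prod_pos
  intro ℓ hℓ
  exact factor_pos hw hw1 hwlt hγ hη (Finset.mem_Icc.1 hℓ).1

lemma varphi_succ (wt γ η : ℕ → ℝ) (i : ℕ) (hi : 1 ≤ i) :
    varphi wt γ η i = varphi wt γ η (i - 1) * (1 - wt (i + 1) * (1 - γ i + η i * γ i)) := by
  obtain ⟨k, rfl⟩ : ∃ k, i = k + 1 := ⟨i - 1, by omega⟩
  simpa [varphi] using Finset.prod_Icc_succ_top (by omega : 1 ≤ k + 1)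
    (fun ℓ => (1 - wt (ℓ + 1) * (1 - γ ℓ + η ℓ * γ ℓ)))

lemma Hsig_le {Ω : Type*} [mΩ : MeasurableSpace Ω] (R : ℕ → Ω → ℕ)
    (hRmeas : ∀ i, Measurable (R i)) (i : ℕ) : Hsig R i ≤ mΩ := by
  apply iSup₂_le
  intro j _
  rintro s ⟨t, -, rfl⟩
  exact hRmeas j (MeasurableSpace.measurableSet_top)

lemma measR_Hsig {Ω : Type*} (R : ℕ → Ω → ℕ) {i j : ℕ} (hj : j ∈ Finset.Icc 1 i) :
    Measurable[Hsig R i] (R j) := by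
  intro s _
  have hle : MeasurableSpace.comap (R j) ⊤ ≤ Hsig R i := by
    exact le_biSup (f := fun j => MeasurableSpace.comap (R j) ⊤) hj
  exact hle _ ⟨s, MeasurableSpace.measurableSet_top, rfl⟩

lemma betaH_meas {Ω : Type*} (w : ℕ → ℝ) (R : ℕ → Ω → ℕ) (i m : ℕ) :
    Measurable[Hsig R i] (betaH w R i m) := by
  unfold betaH
  apply Measurable.div_const
  apply Finset.measurable_sum
  intro j hj
  have hs : MeasurableSet[Hsig R i] {ω | R j ω = m} :=
    measR_Hsig R hj (measurableSet_singleton m)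
  exact (Measurable.ite hs measurable_const measurable_const).const_mul _

lemma ind_integrable {Ω : Type*} [MeasurableSpace Ω] (μ : Measure Ω) [IsProbabilityMeasure μ]
    (f : Ω → ℕ) (hf : Measurable f) (m : ℕ) :
    Integrable (fun ω => if f ω = m then (1 : ℝ) else 0) μ := by
  apply Integrable.mono' (integrable_const (1 : ℝ))
  · exact ((Measurable.ite (hf (measurableSet_singleton m)) measurable_const
      measurable_const).stronglyMeasurable).aestronglyMeasurable
  · filter_upwards with ω
    split <;> simp

lemma betaH_integrable {Ω : Type*} [MeasurableSpace Ω] (μ : Measure Ω) [IsProbabilityMeasure μ]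
    (w : ℕ → ℝ) (R : ℕ → Ω → ℕ) (hRmeas : ∀ i, Measurable (R i)) (i m : ℕ) :
    Integrable (betaH w R i m) μ := by
  unfold betaH
  apply Integrable.div_const
  apply integrable_finset_sum
  intro j _
  exact (ind_integrable μ (R j) (hRmeas j) m).const_mul _

lemma betaH_succ {Ω : Type*} (w : ℕ → ℝ) (hw : ∀ j, 0 ≤ w j) (hw1 : 0 < w 1)
    (R : ℕ → Ω → ℕ) (i m : ℕ) (hi : 1 ≤ i) (ω : Ω) :
    betaH w R (i + 1) m ω
      = (1 - wnorm w (i + 1)) * betaH w R i m ω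
        + wnorm w (i + 1) * (if R (i + 1) ω = m then (1 : ℝ) else 0) := by
  have hSi : 0 < Sw w i := Sw_pos hw hw1 hi
  have hSi1 : 0 < Sw w (i + 1) := Sw_pos hw hw1 (by omega)
  have hsum : (∑ j ∈ Finset.Icc 1 (i + 1), w j * (if R j ω = m then (1 : ℝ) else 0))
      = (∑ j ∈ Finset.Icc 1 i, w j * (if R j ω = m then (1 : ℝ) else 0))
        + w (i + 1) * (if R (i + 1) ω = m then (1 : ℝ) else 0) :=
    Finset.sum_Icc_succ_top (by omega : 1 ≤ i + 1) _
  have hS : Sw w (i + 1) = Sw w i + w (i + 1) := Sw_succ w i hi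
  unfold betaH wnorm
  rw [hsum, hS]
  set X := (if R (i + 1) ω = m then (1 : ℝ) else 0) with hX
  set A := ∑ j ∈ Finset.Icc 1 i, w j * (if R j ω = m then (1 : ℝ) else 0) with hA
  have h1 : Sw w i ≠ 0 := hSi.ne'
  have h2 : Sw w i + w (i + 1) ≠ 0 := by rw [← hS]; exact hSi1.ne'
  field_simp
  ring


/-- under the linear herding model with `w̃_ℓ < 1` for `ℓ ≥ 2`,
the rescaled error `β̂_{i,m} = (β_{i,m} − α_m)/ϕ_{i−1}` is a martingale with
respect to `(𝓗_i)_{i≥1}`: `E[β̂_{i+1,m} | 𝓗_i] = β̂_{i,m}` a.s. for all `i ≥ 1`. -/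
theorem stmt_14
    {Ω : Type*} [MeasurableSpace Ω] (μ : Measure Ω) [IsProbabilityMeasure μ]
    (M : ℕ) (hM : 1 ≤ M)
    (α : ℕ → ℝ) (hα : ∀ m ∈ Finset.Icc 1 M, α m ∈ Set.Icc (0 : ℝ) 1)
    (hα1 : ∑ m ∈ Finset.Icc 1 M, α m = 1)
    (R : ℕ → Ω → ℕ) (hRrange : ∀ i, 1 ≤ i → ∀ ω, R i ω ∈ Finset.Icc 1 M)
    (hRmeas : ∀ i, Measurable (R i))
    (w : ℕ → ℝ) (hw : ∀ j, 0 ≤ w j) (hw1 : 0 < w 1)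
    (hwlt : ∀ ℓ : ℕ, 2 ≤ ℓ → wnorm w ℓ < 1)
    (γ : ℕ → ℝ) (hγ : ∀ i, γ i ∈ Set.Icc (0 : ℝ) 1)
    (η : ℕ → ℝ) (hη : ∀ i, η i ∈ Set.Icc (0 : ℝ) 1)
    -- linear herding model
    (hmodel : ∀ i : ℕ, 1 ≤ i → ∀ m ∈ Finset.Icc 1 M,
      μ[(fun ω => if R (i + 1) ω = m then (1 : ℝ) else 0) | Hsig R i]
        =ᵐ[μ] fun ω =>
          γ i * ((1 - η i) * betaH w R i m ω + η i * α m) + (1 - γ i) * α m)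
    (m : ℕ) (hm : m ∈ Finset.Icc 1 M) :
    ∀ i : ℕ, 1 ≤ i →
      μ[(fun ω => betaHat w γ η R α (i + 1) m ω) | Hsig R i]
        =ᵐ[μ] fun ω => betaHat w γ η R α i m ω := by
  intro i hi
  have hle : Hsig R i ≤ ‹MeasurableSpace Ω› := Hsig_le R hRmeas i
  set wt := wnorm w (i + 1) with hwt
  set φi := varphi (wnorm w) γ η i with hφidef
  set φ := varphi (wnorm w) γ η (i - 1) with hφdef
  have hφpos : 0 < φ := varphi_pos hw hw1 hwlt hγ hη (i - 1)
  have hφipos : 0 < φi := varphi_pos hw hw1 hwlt hγ hη i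
  have hc : φi = φ * (1 - wt * (1 - γ i + η i * γ i)) := varphi_succ (wnorm w) γ η i hi
  have hcpos : 0 < 1 - wt * (1 - γ i + η i * γ i) := factor_pos hw hw1 hwlt hγ hη hi
  set X : Ω → ℝ := fun ω => if R (i + 1) ω = m then (1 : ℝ) else 0 with hXdef
  set G : Ω → ℝ := fun ω => ((1 - wt) * betaH w R i m ω - α m) / φi with hGdef
  have hdecomp : (fun ω => betaHat w γ η R α (i + 1) m ω) = (wt / φi) • X + G := by
    funext ω
    simp only [betaHat, Pi.add_apply, Pi.smul_apply, smul_eq_mul, hGdef, hXdef]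
    rw [betaH_succ w hw hw1 R i m hi ω]
    have h1 : (i + 1) - 1 = i := by omega
    rw [h1, ← hφidef, ← hwt]
    set Y := (if R (i + 1) ω = m then (1 : ℝ) else 0) with hY
    field_simp
    ring
  have hXint : Integrable X μ := ind_integrable μ (R (i + 1)) (hRmeas (i + 1)) m
  have hGint : Integrable G μ :=
    (((betaH_integrable μ w R hRmeas i m).const_mul _).sub (integrable_const _)).div_const _
  have hGsm : StronglyMeasurable[Hsig R i] G := by
    apply Measurable.stronglyMeasurable
    exact (((betaH_meas w R i m).const_mul _).sub measurable_const).div_const _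
  have step1 : μ[(wt / φi) • X + G | Hsig R i]
      =ᵐ[μ] μ[(wt / φi) • X | Hsig R i] + μ[G | Hsig R i] :=
    condExp_add (hXint.smul _) hGint _
  have step2 : μ[(wt / φi) • X | Hsig R i] =ᵐ[μ] (wt / φi) • μ[X | Hsig R i] :=
    condExp_smul _ _ _
  have step3 : μ[G | Hsig R i] = G := condExp_of_stronglyMeasurable hle hGsm hGint
  rw [hdecomp]
  filter_upwards [step1, step2, hmodel i hi m hm] with ω h1 h2 h3
  rw [h1, Pi.add_apply, h2, step3, Pi.smul_apply, smul_eq_mul, h3]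
  simp only [hGdef, betaHat, ← hφdef]
  rw [hc]
  have hbne : φ * (1 - wt * (1 - γ i + η i * γ i)) ≠ 0 := by positivity
  have hcne : 1 - wt * (1 - γ i + γ i * η i) ≠ 0 := by rw [mul_comm (γ i)]; exact hcpos.ne'
  field_simp
  ring
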